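/- Let n ≥ 4 be an even integer and let ℓ be an integer with 1 ≤ ℓ ≤ n/2 − 1. Let M be a matching of size ℓ in the complete graph K_{n−1} on n − 1 vertices. Let H be the graph obtained from K_{n−1} by removing the ℓ edges of M, adding one new vertex w, and joining w to all 2ℓ vertices covered by M. Then H is Eulerian, has n vertices, and has n(n−1)/2 − (n − 1 − ℓ) edges. -/

import Mathlib

open SimpleGraph Finset
open scoped Classical

/-- A simple graph is Eulerian if it is connected and every vertex has even degree. -/
def IsEulerianGraph {V : Type*} [Fintype V] (G : SimpleGraph V) : Prop :=
  G.Connected ∧ ∀ v : V, Even (G.degree v)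

lemma matching_support_ncard {V : Type*} [Fintype V] {G : SimpleGraph V} {M : G.Subgraph}
    (hM : M.IsMatching) : M.support.ncard = 2 * M.edgeSet.ncard := by
  classical
  have hadj_of : ∀ {e : Sym2 V} {v : V} (he : e ∈ M.edgeSet) (hv : v ∈ e),
      M.Adj v (Sym2.Mem.other hv) := by
    intro e v he hv
    rw [← Sym2.other_spec hv] at he
    exact Subgraph.mem_edgeSet.mp he
  have houtmem : ∀ (e : Sym2 V) (v : V), v ∈ e ↔ v = e.out.1 ∨ v = e.out.2 := by
    intro e v
    have h : s(e.out.1, e.out.2) = e := e.out_eq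
    conv_lhs => rw [← h, Sym2.mem_iff]
  have key : M.support.toFinset =
      M.edgeSet.toFinset.biUnion (fun e => {e.out.1, e.out.2}) := by
    ext v
    simp only [Set.mem_toFinset, Finset.mem_biUnion, Finset.mem_insert, Finset.mem_singleton,
      SimpleGraph.Subgraph.mem_support]
    constructor
    · rintro ⟨w, hw⟩
      exact ⟨s(v, w), Subgraph.mem_edgeSet.mpr hw,
        (houtmem _ v).mp (Sym2.mem_mk_left _ _)⟩
    · rintro ⟨e, he, hv⟩
      have hv' : v ∈ e := (houtmem e v).mpr hv
      exact ⟨_, hadj_of he hv'⟩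
  have hdisj : ∀ e ∈ M.edgeSet.toFinset, ∀ f ∈ M.edgeSet.toFinset, e ≠ f →
      Disjoint ({e.out.1, e.out.2} : Finset V) {f.out.1, f.out.2} := by
    intro e he f hf hef
    rw [Finset.disjoint_left]
    intro v hve hvf
    have hve' : v ∈ e := (houtmem e v).mpr (by simpa using hve)
    have hvf' : v ∈ f := (houtmem f v).mpr (by simpa using hvf)
    have h1 := hadj_of (Set.mem_toFinset.mp he) hve'
    have h2 := hadj_of (Set.mem_toFinset.mp hf) hvf'
    have hvv : v ∈ M.verts := M.edge_vert h1
    obtain ⟨w, _, hw⟩ := hM hvv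
    have heq : Sym2.Mem.other hve' = Sym2.Mem.other hvf' := by
      rw [hw _ h1, hw _ h2]
    apply hef
    rw [← Sym2.other_spec hve', ← Sym2.other_spec hvf', heq]
  have hcard2 : ∀ e ∈ M.edgeSet.toFinset, ({e.out.1, e.out.2} : Finset V).card = 2 := by
    intro e he
    have hnd : ¬ e.IsDiag :=
      G.not_isDiag_of_mem_edgeSet (M.edgeSet_subset (Set.mem_toFinset.mp he))
    have hne : e.out.1 ≠ e.out.2 := by
      rw [← e.out_eq, Sym2.isDiag_iff_proj_eq] at hnd
      exact hnd
    rw [Finset.card_insert_of_notMem (by simpa using hne), Finset.card_singleton]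
  rw [Set.ncard_eq_toFinset_card', Set.ncard_eq_toFinset_card', key,
    Finset.card_biUnion hdisj, Finset.sum_congr rfl hcard2, Finset.sum_const, smul_eq_mul,
    Nat.mul_comm]

theorem complete_minus_matching_plus_apex_eulerian (n ℓ : ℕ) (hn4 : 4 ≤ n)
    (heven : Even n) (hℓ1 : 1 ≤ ℓ) (hℓ : ℓ ≤ n / 2 - 1)
    (M : (⊤ : SimpleGraph (Fin (n - 1))).Subgraph) (hM : M.IsMatching)
    (hMcard : M.edgeSet.ncard = ℓ) :
    -- `H` is obtained from `K_{n-1}` by removing the edges of `M`, adding a new vertex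
    -- `w = none`, and joining `w` to all vertices covered by `M`
    (let H : SimpleGraph (Option (Fin (n - 1))) :=
      SimpleGraph.fromEdgeSet
        ((Sym2.map some '' ((⊤ : SimpleGraph (Fin (n - 1))).edgeSet \ M.edgeSet)) ∪
          {e | ∃ x ∈ M.support, e = s((none : Option (Fin (n - 1))), some x)});
     IsEulerianGraph H ∧
     Fintype.card (Option (Fin (n - 1))) = n ∧
     H.edgeFinset.card = n * (n - 1) / 2 - (n - 1 - ℓ)) := by
  intro H
  have hH : H = SimpleGraph.fromEdgeSet
        ((Sym2.map some '' ((⊤ : SimpleGraph (Fin (n - 1))).edgeSet \ M.edgeSet)) ∪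
          {e | ∃ x ∈ M.support, e = s((none : Option (Fin (n - 1))), some x)}) := rfl
  -- adjacency characterizations
  have hadj_ss : ∀ a b : Fin (n-1), H.Adj (some a) (some b) ↔ a ≠ b ∧ s(a, b) ∉ M.edgeSet := by
    intro a b
    rw [hH, SimpleGraph.fromEdgeSet_adj]
    constructor
    · rintro ⟨h1 | h2, hne⟩
      · obtain ⟨e, he, heq⟩ := h1
        rw [show s(Option.some a, Option.some b) = Sym2.map some s(a, b) from rfl] at heq
        have := Sym2.map.injective (Option.some_injective _) heq
        subst this
        rw [Set.mem_diff, SimpleGraph.mem_edgeSet, top_adj] at he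
        exact ⟨he.1, he.2⟩
      · exfalso
        obtain ⟨x, _, hx⟩ := h2
        have : (none : Option (Fin (n-1))) ∈ s(Option.some a, Option.some b) := by
          rw [hx]; exact Sym2.mem_mk_left _ _
        simp at this
    · rintro ⟨hab, hnm⟩
      refine ⟨Or.inl ⟨s(a, b), ?_, rfl⟩, by simpa using hab⟩
      rw [Set.mem_diff, SimpleGraph.mem_edgeSet, top_adj]
      exact ⟨hab, hnm⟩
  have hadj_ns : ∀ x : Fin (n-1), H.Adj none (some x) ↔ x ∈ M.support := by
    intro x
    rw [hH, SimpleGraph.fromEdgeSet_adj]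
    constructor
    · rintro ⟨h1 | h2, _⟩
      · exfalso
        obtain ⟨e, _, heq⟩ := h1
        have : (none : Option (Fin (n-1))) ∈ Sym2.map some e := by
          rw [heq]; exact Sym2.mem_mk_left _ _
        rw [Sym2.mem_map] at this
        obtain ⟨y, _, hy⟩ := this
        exact Option.some_ne_none y hy
      · obtain ⟨y, hy, heq⟩ := h2
        have : x = y := by
          have := Sym2.eq_iff.mp heq
          aesop
        rwa [this]
    · intro hx
      exact ⟨Or.inr ⟨x, hx, rfl⟩, by simp⟩
  have hadj_sn : ∀ x : Fin (n-1), H.Adj (some x) none ↔ x ∈ M.support := by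
    intro x; rw [SimpleGraph.adj_comm]; exact hadj_ns x
  have hnn : ¬ H.Adj none none := H.irrefl
  have hsupcard : M.support.ncard = 2 * ℓ := by
    rw [matching_support_ncard hM, hMcard]
  -- degree of the apex
  have hdeg_none : H.degree none = 2 * ℓ := by
    have hnf : H.neighborFinset none = M.support.toFinset.image some := by
      ext u
      cases u with
      | none => simp [SimpleGraph.mem_neighborFinset, hnn]
      | some x => simp [SimpleGraph.mem_neighborFinset, hadj_ns x]
    rw [← hsupcard, Set.ncard_eq_toFinset_card']
    rw [SimpleGraph.degree, hnf, Finset.card_image_of_injective _ (Option.some_injective _)]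
  -- degree of the other vertices
  have hdeg_some : ∀ v : Fin (n-1), H.degree (some v) = n - 2 := by
    intro v
    have hnf : H.neighborFinset (some v) =
        ((univ.filter (fun b : Fin (n-1) => v ≠ b ∧ s(v, b) ∉ M.edgeSet)).image some) ∪
          (if v ∈ M.support then ({none} : Finset (Option (Fin (n-1)))) else ∅) := by
      ext u
      cases u with
      | none =>
        by_cases hv : v ∈ M.support <;>
          simp [SimpleGraph.mem_neighborFinset, hadj_sn v, hv]
      | some b =>
        by_cases hv : v ∈ M.support <;>
          simp [SimpleGraph.mem_neighborFinset, hadj_ss v b, hv]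
    have hdisj : Disjoint ((univ.filter (fun b : Fin (n-1) => v ≠ b ∧ s(v, b) ∉ M.edgeSet)).image some)
        (if v ∈ M.support then ({none} : Finset (Option (Fin (n-1)))) else ∅) := by
      rw [Finset.disjoint_right]
      intro u hu
      split_ifs at hu with h
      · simp only [Finset.mem_singleton] at hu
        subst hu
        simp
      · simp at hu
    have hC : (univ.filter (fun b : Fin (n-1) => v ≠ b)).card = n - 2 := by
      rw [Finset.filter_ne, Finset.card_erase_of_mem (Finset.mem_univ v), Finset.card_univ,
        Fintype.card_fin]
      omega
    have hsplit := Finset.card_filter_add_card_filter_not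
      (s := univ.filter (fun b : Fin (n-1) => v ≠ b)) (p := fun b => s(v, b) ∈ M.edgeSet)
    have hA : (univ.filter (fun b : Fin (n-1) => v ≠ b ∧ s(v, b) ∉ M.edgeSet))
        = (univ.filter (fun b : Fin (n-1) => v ≠ b)).filter (fun b => ¬ (s(v, b) ∈ M.edgeSet)) := by
      rw [Finset.filter_filter]
    have hB : ((univ.filter (fun b : Fin (n-1) => v ≠ b)).filter
        (fun b => s(v, b) ∈ M.edgeSet)).card = if v ∈ M.support then 1 else 0 := by
      split_ifs with hv
      · obtain ⟨w, hw, huniq⟩ := hM (M.support_subset_verts hv)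
        rw [show ((univ.filter (fun b : Fin (n-1) => v ≠ b)).filter
            (fun b => s(v, b) ∈ M.edgeSet)) = {w} from ?_, Finset.card_singleton]
        ext b
        simp only [Finset.mem_filter, Finset.mem_univ, true_and, Finset.mem_singleton]
        constructor
        · rintro ⟨hne, hmem⟩
          exact huniq b (Subgraph.mem_edgeSet.mp hmem)
        · rintro rfl
          refine ⟨?_, Subgraph.mem_edgeSet.mpr hw⟩
          exact fun h => (M.adj_sub hw).ne (h ▸ rfl)
      · rw [Finset.card_eq_zero, Finset.filter_eq_empty_iff]
        intro b _
        intro hmem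
        exact hv ⟨b, Subgraph.mem_edgeSet.mp hmem⟩
    rw [SimpleGraph.degree, hnf, Finset.card_union_of_disjoint hdisj,
      Finset.card_image_of_injective _ (Option.some_injective _), hA]
    rw [hC] at hsplit
    split_ifs with hv
    · rw [if_pos hv] at hB
      simp only [Finset.card_singleton]
      omega
    · rw [if_neg hv] at hB
      simp only [Finset.card_empty]
      omega
  -- connectivity
  have hconn : H.Connected := by
    rw [SimpleGraph.connected_iff]
    refine ⟨?_, ⟨none⟩⟩
    have hsupne : M.support.Nonempty := by
      apply Set.nonempty_of_ncard_ne_zero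
      omega
    obtain ⟨x0, hx0⟩ := hsupne
    have hreach : ∀ u : Option (Fin (n-1)), H.Reachable none u := by
      intro u
      cases u with
      | none => exact SimpleGraph.Reachable.refl _
      | some v =>
        by_cases hv : v ∈ M.support
        · exact ((hadj_ns v).mpr hv).reachable
        · have hne : x0 ≠ v := fun h => hv (h ▸ hx0)
          have hnm : s(x0, v) ∉ M.edgeSet := by
            intro h
            exact hv ⟨x0, (Subgraph.mem_edgeSet.mp h).symm⟩
          exact (((hadj_ns x0).mpr hx0).reachable).trans
            (((hadj_ss x0 v).mpr ⟨hne, hnm⟩).reachable)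
    exact fun u v => (hreach u).symm.trans (hreach v)
  -- sum of degrees
  have hsum := H.sum_degrees_eq_twice_card_edges
  rw [Fintype.sum_option] at hsum
  have hsum2 : (∑ v : Fin (n-1), H.degree (some v)) = (n-1) * (n-2) := by
    rw [Finset.sum_congr rfl (fun v _ => hdeg_some v), Finset.sum_const, Finset.card_univ,
      Fintype.card_fin, smul_eq_mul]
  rw [hdeg_none, hsum2] at hsum
  refine ⟨⟨hconn, ?_⟩, ?_, ?_⟩
  · intro v
    cases v with
    | none =>
      have e : Even (2 * ℓ) := ⟨ℓ, by ring⟩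
      convert e using 1
      convert hdeg_none
    | some v =>
      obtain ⟨k, hk⟩ := heven
      have e : Even (n - 2) := ⟨k - 1, by omega⟩
      convert e using 1
      convert hdeg_some v
  · simp only [Fintype.card_option, Fintype.card_fin]
    omega
  · obtain ⟨j, rfl⟩ : ∃ j, n = 2*j + 4 := by
      obtain ⟨k, hk⟩ := heven
      exact ⟨k - 2, by omega⟩
    have hsum' : 2 * ℓ + (2*j + 4 - 1) * (2*j + 4 - 2) = 2 * H.edgeFinset.card := by
      convert hsum using 4
    clear hsum
    rename' hsum' => hsum
    set E := H.edgeFinset.card with hE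
    clear_value E
    have e1 : 2*j + 4 - 1 = 2*j + 3 := by omega
    have e2 : 2*j + 4 - 2 = 2*j + 2 := by omega
    rw [e1, e2] at hsum
    rw [e1]
    have p1 : (2*j+3)*(2*j+2) = 2*((2*j+3)*(j+1)) := by ring
    have p2 : (2*j+4)*(2*j+3) = 2*((j+2)*(2*j+3)) := by ring
    rw [p1] at hsum
    rw [p2, Nat.mul_div_cancel_left _ (by norm_num : 0 < 2)]
    have p3 : (j+2)*(2*j+3) = (2*j+3)*(j+1) + (2*j+3) := by ring
    have hl' : ℓ ≤ j + 1 := by omega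
    obtain ⟨P, hP⟩ : ∃ P, (2*j+3)*(j+1) = P := ⟨_, rfl⟩
    rw [hP] at hsum p3
    rw [p3]
    omega
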